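/- Let K be a differential field of characteristic 0 with derivation D, let k ⊆ K be a subfield with K/k a finite Galois extension with group G = Gal(K/k) of order m, and suppose every σ ∈ G commutes with D. Let c : G × G → Kˣ take values in the constants of K (D(c(σ,τ)) = 0 for all σ,τ) and let f : G → Kˣ satisfy f(στ) = c(σ,τ)·f(σ)·σ(f(τ)) for all σ,τ ∈ G. Then the element v := −(1/m)·Σ_{τ∈G} logD f(τ) of K satisfies σ(v) − v = logD f(σ) for every σ ∈ G, and moreover −m·v = logD(Π_{τ∈G} f(τ)). -/

import Mathlib

section aux
variable {K : Type*} [Field K]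

theorem logD_mul (D : K → K) (hDmul : ∀ x y : K, D (x * y) = x * D y + D x * y)
    {x y : K} (hx : x ≠ 0) (hy : y ≠ 0) :
    D (x * y) / (x * y) = D x / x + D y / y := by
  field_simp
  rw [hDmul]; ring

theorem logD_prod (D : K → K) (hDmul : ∀ x y : K, D (x * y) = x * D y + D x * y)
    {ι : Type*} (s : Finset ι) (g : ι → Kˣ) :
    D (∏ i ∈ s, (g i : K)) / ∏ i ∈ s, (g i : K) = ∑ i ∈ s, D (g i : K) / (g i : K) := by
  classical
  induction s using Finset.induction with
  | empty =>
    have h1 := hDmul 1 1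
    simp at h1
    simp [h1]
  | insert _ _ hi ih =>
    rename_i a s
    rw [Finset.prod_insert hi, Finset.sum_insert hi,
      logD_mul D hDmul (Units.ne_zero _)
        (Finset.prod_ne_zero_iff.2 fun i _ => Units.ne_zero _), ih]
end aux

/-- Let `K` be a differential field of characteristic 0 with derivation `D`,
`k ⊆ K` a subfield with `K/k` finite Galois with group `G` of order `m`, each `σ ∈ G`
commuting with `D`.  If `c : G × G → Kˣ` takes values in the constants and
`f : G → Kˣ` satisfies `f(στ) = c(σ,τ)·f(σ)·σ(f(τ))`, then
`v := −(1/m)·Σ_τ logD f(τ)` satisfies `σ(v) − v = logD f(σ)` for all `σ`, and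
`−m·v = logD (Π_τ f(τ))`. -/
theorem stmt1 (k K : Type*) [Field k] [Field K] [Algebra k K] [CharZero K]
    [FiniteDimensional k K] [IsGalois k K]
    (D : K → K)
    (hDadd : ∀ x y : K, D (x + y) = D x + D y)
    (hDmul : ∀ x y : K, D (x * y) = x * D y + D x * y)
    (hcomm : ∀ (σ : K ≃ₐ[k] K) (x : K), σ (D x) = D (σ x))
    (m : ℕ) (hm : Fintype.card (K ≃ₐ[k] K) = m)
    (c : (K ≃ₐ[k] K) → (K ≃ₐ[k] K) → Kˣ)
    (hcconst : ∀ σ τ : K ≃ₐ[k] K, D (c σ τ : K) = 0)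
    (f : (K ≃ₐ[k] K) → Kˣ)
    (hf : ∀ σ τ : K ≃ₐ[k] K, (f (σ * τ) : K) = (c σ τ : K) * (f σ : K) * σ (f τ : K)) :
    (∀ σ : K ≃ₐ[k] K,
        σ (-(1 / (m : K)) * ∑ τ : K ≃ₐ[k] K, D (f τ : K) / (f τ : K)) -
          (-(1 / (m : K)) * ∑ τ : K ≃ₐ[k] K, D (f τ : K) / (f τ : K)) =
        D (f σ : K) / (f σ : K)) ∧
      -(m : K) * (-(1 / (m : K)) * ∑ τ : K ≃ₐ[k] K, D (f τ : K) / (f τ : K)) =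
        D (∏ τ : K ≃ₐ[k] K, (f τ : K)) / ∏ τ : K ≃ₐ[k] K, (f τ : K) := by
  classical
  have hm0 : (m : K) ≠ 0 := by
    have : m ≠ 0 := by rw [← hm]; exact Fintype.card_ne_zero
    exact_mod_cast this
  set S : K := ∑ τ : K ≃ₐ[k] K, D (f τ : K) / (f τ : K) with hS
  -- key identity
  have key : ∀ σ : K ≃ₐ[k] K, S = (m : K) * (D (f σ : K) / (f σ : K)) + σ S := by
    intro σ
    have hreindex : S = ∑ τ : K ≃ₐ[k] K, D (f (σ * τ) : K) / (f (σ * τ) : K) :=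
      (Fintype.sum_equiv (Equiv.mulLeft σ) _ _ fun τ => rfl).symm
    have hterm : ∀ τ : K ≃ₐ[k] K,
        D (f (σ * τ) : K) / (f (σ * τ) : K)
          = D (f σ : K) / (f σ : K) + σ (D (f τ : K) / (f τ : K)) := by
      intro τ
      rw [hf σ τ,
        logD_mul D hDmul (mul_ne_zero (Units.ne_zero _) (Units.ne_zero _))
          (by simpa using (f τ).ne_zero),
        logD_mul D hDmul (Units.ne_zero _) (Units.ne_zero _), hcconst,
        map_div₀, hcomm]
      ring
    calc S = ∑ τ : K ≃ₐ[k] K, D (f (σ * τ) : K) / (f (σ * τ) : K) := hreindex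
      _ = ∑ τ : K ≃ₐ[k] K, (D (f σ : K) / (f σ : K) + σ (D (f τ : K) / (f τ : K))) :=
          Finset.sum_congr rfl fun τ _ => hterm τ
      _ = (m : K) * (D (f σ : K) / (f σ : K)) + σ S := by
          rw [Finset.sum_add_distrib, Finset.sum_const, ← map_sum, Finset.card_univ, hm,
            nsmul_eq_mul]
  refine ⟨fun σ => ?_, ?_⟩
  · have h := key σ
    rw [map_mul, map_neg, map_div₀, map_one, map_natCast]
    set L : K := D (f σ : K) / (f σ : K) with hL
    field_simp
    linear_combination h
  · rw [logD_prod D hDmul]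
    field_simp
    exact hS
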